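/- Let g : ℝ → ℝ be a trigonometric polynomial of degree at most d (i.e., g(θ) = Σ_{k=0}^d a_k cos(kθ) + b_k sin(kθ)) with |g(θ)| ≤ 1 for all θ. Then the function f = g² satisfies |f'(θ)| ≤ d for all θ ∈ ℝ. -/

import Mathlib

open Real Finset

noncomputable def rpt (N j : ℕ) : ℝ := (2*j+1) * Real.pi / (2*N)

lemma rpt_half_pos (N j : ℕ) (hN : 0 < N) : 0 < rpt N j / 2 := by
  unfold rpt
  positivity

lemma rpt_half_lt_pi (N : ℕ) (hN : 0 < N) {j : ℕ} (hj : j < 2*N) : rpt N j / 2 < Real.pi := by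
  unfold rpt
  rw [div_div, div_lt_iff₀ (by positivity)]
  have : (2*(j:ℝ)+1) < 2*(2*N) := by
    have : (j:ℝ)+1 ≤ 2*N := by exact_mod_cast hj
    linarith
  nlinarith [Real.pi_pos]

lemma sin_rpt_half_pos (N : ℕ) (hN : 0 < N) {j : ℕ} (hj : j < 2*N) :
    0 < Real.sin (rpt N j / 2) :=
  Real.sin_pos_of_pos_of_lt_pi (rpt_half_pos N j hN) (rpt_half_lt_pi N hN hj)

-- product-to-sum helper
lemma sin_diff_eq (x c : ℝ) : Real.sin (x + c) - Real.sin (x - c) = 2 * Real.cos x * Real.sin c := by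
  rw [Real.sin_add, Real.sin_sub]; ring

lemma two_N_mul_q (N : ℕ) (hN : 0 < N) : (2*(N:ℝ)) * (Real.pi/(2*N)) = Real.pi := by
  have hN' : (2*(N:ℝ)) ≠ 0 := by positivity
  field_simp

lemma rpt_eq (N j : ℕ) : rpt N j = (2*j+1) * (Real.pi/(2*N)) := by
  unfold rpt; rw [mul_div_assoc]

lemma sumcos (N : ℕ) (hN : 0 < N) {l : ℕ} (hl1 : 1 ≤ l) (hl2 : l < 2*N) :
    ∑ j ∈ Finset.range (2*N), Real.cos (l * rpt N j) = 0 := by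
  set q : ℝ := Real.pi/(2*N) with hq
  have hqpos : 0 < q := by rw [hq]; positivity
  have hcpos : 0 < (l:ℝ)*q := by
    have : (0:ℝ) < l := by exact_mod_cast hl1
    positivity
  have hclt : (l:ℝ)*q < Real.pi := by
    rw [← two_N_mul_q N hN, ← hq]
    have : (l:ℝ) < 2*N := by exact_mod_cast hl2
    nlinarith
  have hsc : Real.sin ((l:ℝ)*q) ≠ 0 := (Real.sin_pos_of_pos_of_lt_pi hcpos hclt).ne'
  have key : ∀ j : ℕ, 2 * Real.cos (l * rpt N j) * Real.sin ((l:ℝ)*q)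
      = Real.sin ((j+1:ℕ) * (2*l*q)) - Real.sin ((j:ℕ) * (2*l*q)) := by
    intro j
    have h1 : (l:ℝ) * rpt N j + (l:ℝ)*q = ((j+1:ℕ):ℝ) * (2*l*q) := by
      rw [rpt_eq, ← hq]; push_cast; ring
    have h2 : (l:ℝ) * rpt N j - (l:ℝ)*q = ((j:ℕ):ℝ) * (2*l*q) := by
      rw [rpt_eq, ← hq]; push_cast; ring
    rw [← h1, ← h2, sin_diff_eq]
  have h2 : ∑ j ∈ Finset.range (2*N), 2 * Real.cos (l * rpt N j) * Real.sin ((l:ℝ)*q) = 0 := by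
    rw [Finset.sum_congr rfl (fun j _ => key j)]
    rw [Finset.sum_range_sub (fun j : ℕ => Real.sin ((j:ℕ) * (2*l*q)))]
    have : ((2*N : ℕ):ℝ) * (2*l*q) = ((2*l : ℕ):ℝ) * Real.pi := by
      push_cast
      rw [← two_N_mul_q N hN, ← hq]; ring
    rw [this, Real.sin_nat_mul_pi]
    simp
  have h3 := Finset.sum_congr rfl (fun (j:ℕ) (_ : j ∈ Finset.range (2*N)) =>
    (by ring : 2 * Real.cos (l * rpt N j) * Real.sin ((l:ℝ)*q)
      = (2*Real.sin ((l:ℝ)*q)) * Real.cos (l * rpt N j)))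
  rw [h3, ← Finset.mul_sum] at h2
  rcases mul_eq_zero.1 h2 with h | h
  · exact absurd h (by simp [hsc])
  · exact h

lemma dirichlet (r : ℕ) (x : ℝ) :
    Real.sin ((r:ℝ)*x + x/2)
      = Real.sin (x/2) * (1 + 2 * ∑ l ∈ Finset.range r, Real.cos ((l+1:ℕ)*x)) := by
  induction r with
  | zero => simp
  | succ r ih =>
    have key : Real.sin (((r:ℝ)+1)*x + x/2) - Real.sin ((r:ℝ)*x + x/2)
        = 2 * Real.cos (((r:ℝ)+1)*x) * Real.sin (x/2) := by
      rw [← sin_diff_eq (((r:ℝ)+1)*x) (x/2)]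
      ring_nf
    have : Real.sin (((r:ℝ)+1)*x + x/2)
        = Real.sin ((r:ℝ)*x + x/2) + 2 * Real.cos (((r:ℝ)+1)*x) * Real.sin (x/2) := by
      linarith [key]
    push_cast
    rw [this, ih, Finset.sum_range_succ]
    push_cast
    ring

lemma sumdir (N : ℕ) (hN : 0 < N) {r : ℕ} (hr : r < 2*N) :
    ∑ j ∈ Finset.range (2*N),
      Real.sin ((r:ℝ) * rpt N j + rpt N j / 2) / Real.sin (rpt N j / 2) = 2*N := by
  have key : ∀ j ∈ Finset.range (2*N),
      Real.sin ((r:ℝ) * rpt N j + rpt N j / 2) / Real.sin (rpt N j / 2)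
        = 1 + 2 * ∑ l ∈ Finset.range r, Real.cos ((l+1:ℕ) * rpt N j) := by
    intro j hj
    rw [dirichlet, mul_comm (Real.sin (rpt N j / 2)), mul_div_assoc,
      div_self (sin_rpt_half_pos N hN (Finset.mem_range.1 hj)).ne', mul_one]
  rw [Finset.sum_congr rfl key, Finset.sum_add_distrib, ← Finset.mul_sum, Finset.sum_comm]
  have inner : ∀ l ∈ Finset.range r,
      ∑ j ∈ Finset.range (2*N), Real.cos ((l+1:ℕ) * rpt N j) = 0 := by
    intro l hl
    have := Finset.mem_range.1 hl
    exact sumcos N hN (Nat.le_add_left 1 l) (by omega)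
  rw [Finset.sum_congr rfl inner]
  simp

lemma sin_N_rpt (N : ℕ) (hN : 0 < N) (j : ℕ) :
    Real.sin ((N:ℝ) * rpt N j) = (-1)^j := by
  have hNq : (N:ℝ) * (Real.pi/(2*N)) = Real.pi/2 := by
    have := two_N_mul_q N hN; linarith
  have harg : (N:ℝ) * rpt N j = (j:ℝ)*Real.pi + Real.pi/2 := by
    rw [rpt_eq]
    calc (N:ℝ) * ((2*j+1) * (Real.pi/(2*N))) = (2*j+1) * ((N:ℝ)*(Real.pi/(2*N))) := by ring
    _ = (j:ℝ)*Real.pi + Real.pi/2 := by rw [hNq]; ring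
  rw [harg, Real.sin_add_pi_div_two]
  have := Real.cos_nat_mul_pi_sub 0 j
  simpa using this

lemma sin_mul_cos' (A B : ℝ) :
    Real.sin A * Real.cos B = (Real.sin (A+B) + Real.sin (A-B))/2 := by
  rw [Real.sin_add, Real.sin_sub]; ring

lemma sumB (N : ℕ) (hN : 0 < N) {m : ℕ} (hm : m + 1 ≤ N) :
    ∑ j ∈ Finset.range (2*N),
      (-1)^j * Real.cos ((m:ℝ) * rpt N j + rpt N j / 2) / Real.sin (rpt N j / 2)
      = 2*N := by
  have hr2 : ((N-(m+1):ℕ):ℝ) = (N:ℝ) - m - 1 := by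
    push_cast [Nat.cast_sub hm]; ring
  have key : ∀ j ∈ Finset.range (2*N),
      (-1)^j * Real.cos ((m:ℝ) * rpt N j + rpt N j / 2) / Real.sin (rpt N j / 2)
      = (Real.sin (((N+m:ℕ):ℝ) * rpt N j + rpt N j / 2) / Real.sin (rpt N j / 2)
        + Real.sin (((N-(m+1):ℕ):ℝ) * rpt N j + rpt N j / 2) / Real.sin (rpt N j / 2)) / 2 := by
    intro j hj
    have hA : (N:ℝ) * rpt N j + ((m:ℝ) * rpt N j + rpt N j / 2)
        = ((N+m:ℕ):ℝ) * rpt N j + rpt N j / 2 := by push_cast; ring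
    have hB : (N:ℝ) * rpt N j - ((m:ℝ) * rpt N j + rpt N j / 2)
        = ((N-(m+1):ℕ):ℝ) * rpt N j + rpt N j / 2 := by rw [hr2]; ring
    have hnum : ((-1:ℝ))^j * Real.cos ((m:ℝ) * rpt N j + rpt N j / 2)
        = (Real.sin (((N+m:ℕ):ℝ) * rpt N j + rpt N j / 2)
          + Real.sin (((N-(m+1):ℕ):ℝ) * rpt N j + rpt N j / 2)) / 2 := by
      rw [← sin_N_rpt N hN j, sin_mul_cos', hA, hB]
    rw [hnum]; ring
  rw [Finset.sum_congr rfl key]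
  have hsplit : ∀ j ∈ Finset.range (2*N),
      (Real.sin (((N+m:ℕ):ℝ) * rpt N j + rpt N j / 2) / Real.sin (rpt N j / 2)
        + Real.sin (((N-(m+1):ℕ):ℝ) * rpt N j + rpt N j / 2) / Real.sin (rpt N j / 2)) / 2
      = Real.sin (((N+m:ℕ):ℝ) * rpt N j + rpt N j / 2) / Real.sin (rpt N j / 2) / 2
        + Real.sin (((N-(m+1):ℕ):ℝ) * rpt N j + rpt N j / 2) / Real.sin (rpt N j / 2) / 2 := by
    intro j hj; ring
  rw [Finset.sum_congr rfl hsplit, Finset.sum_add_distrib, ← Finset.sum_div, ← Finset.sum_div,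
    sumdir N hN (by omega : N+m < 2*N), sumdir N hN (by omega : N-(m+1) < 2*N)]
  ring

lemma E2 (N : ℕ) (hN : 0 < N) {m : ℕ} (hm : m ≤ N) :
    ∑ j ∈ Finset.range (2*N),
      (-1)^j * Real.sin ((m:ℝ) * rpt N j) / Real.sin (rpt N j / 2)^2
      = 4*(N:ℝ)*m := by
  induction m with
  | zero => simp
  | succ m ih =>
    have ihv := ih (by omega)
    have key : ∀ j ∈ Finset.range (2*N),
        (-1)^j * Real.sin (((m:ℕ)+1:ℝ) * rpt N j) / Real.sin (rpt N j / 2)^2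
        = (-1)^j * Real.sin ((m:ℝ) * rpt N j) / Real.sin (rpt N j / 2)^2
          + 2 * ((-1)^j * Real.cos ((m:ℝ) * rpt N j + rpt N j / 2) / Real.sin (rpt N j / 2)) := by
      intro j hj
      have hs := (sin_rpt_half_pos N hN (Finset.mem_range.1 hj)).ne'
      have hsin : Real.sin (((m:ℕ)+1:ℝ) * rpt N j)
          = Real.sin ((m:ℝ) * rpt N j)
            + 2 * Real.cos ((m:ℝ) * rpt N j + rpt N j / 2) * Real.sin (rpt N j / 2) := by
        have h := sin_diff_eq ((m:ℝ) * rpt N j + rpt N j / 2) (rpt N j / 2)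
        have h1 : (m:ℝ) * rpt N j + rpt N j / 2 + rpt N j / 2 = ((m:ℕ)+1:ℝ) * rpt N j := by
          ring
        have h2 : (m:ℝ) * rpt N j + rpt N j / 2 - rpt N j / 2 = (m:ℝ) * rpt N j := by ring
        rw [h1, h2] at h
        linarith
      rw [hsin]
      field_simp
    push_cast
    rw [Finset.sum_congr rfl key, Finset.sum_add_distrib, ihv, ← Finset.mul_sum,
      sumB N hN (by omega : m + 1 ≤ N)]
    push_cast
    ring

lemma E1 (N : ℕ) (hN : 0 < N) (m : ℕ) :
    ∑ j ∈ Finset.range (2*N),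
      (-1)^j * Real.cos ((m:ℝ) * rpt N j) / Real.sin (rpt N j / 2)^2 = 0 := by
  have hrefl : ∀ j : ℕ, j < 2*N → rpt N (2*N-1-j) = 2*Real.pi - rpt N j := by
    intro j hj
    rw [rpt_eq, rpt_eq]
    have hc : ((2*N-1-j:ℕ):ℝ) = 2*(N:ℝ) - 1 - j := by
      push_cast [Nat.cast_sub (by omega : j ≤ 2*N-1), Nat.cast_sub (by omega : 1 ≤ 2*N)]
      ring
    rw [hc]
    linear_combination (2:ℝ) * two_N_mul_q N hN
  refine Finset.sum_involution (fun j _ => 2*N-1-j) ?_ ?_ ?_ ?_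
  · intro j hj
    have hjlt := Finset.mem_range.1 hj
    have hval : (-1:ℝ)^(2*N-1-j) * Real.cos ((m:ℝ) * rpt N (2*N-1-j)) / Real.sin (rpt N (2*N-1-j) / 2)^2
        = -((-1:ℝ)^j * Real.cos ((m:ℝ) * rpt N j) / Real.sin (rpt N j / 2)^2) := by
      have hcos : Real.cos ((m:ℝ) * rpt N (2*N-1-j)) = Real.cos ((m:ℝ) * rpt N j) := by
        rw [hrefl j hjlt]
        have : (m:ℝ) * (2*Real.pi - rpt N j) = (m:ℝ)*(2*Real.pi) - (m:ℝ)*rpt N j := by ring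
        rw [this, Real.cos_nat_mul_two_pi_sub]
      have hsin : Real.sin (rpt N (2*N-1-j) / 2) = Real.sin (rpt N j / 2) := by
        rw [hrefl j hjlt]
        have : (2*Real.pi - rpt N j)/2 = Real.pi - rpt N j / 2 := by ring
        rw [this, Real.sin_pi_sub]
      have hsgn : (-1:ℝ)^(2*N-1-j) = -(-1:ℝ)^j := by
        rcases Nat.mod_two_eq_zero_or_one j with h | h
        · rw [(Nat.odd_iff.2 (by omega : (2*N-1-j)%2 = 1)).neg_one_pow,
            (Nat.even_iff.2 h).neg_one_pow]
        · rw [(Nat.even_iff.2 (by omega : (2*N-1-j)%2 = 0)).neg_one_pow,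
            (Nat.odd_iff.2 h).neg_one_pow]
          norm_num
      rw [hcos, hsin, hsgn]
      ring
    rw [hval]; ring
  · intro j hj _
    have hjlt := Finset.mem_range.1 hj
    show 2*N-1-j ≠ j
    omega
  · intro j hj
    have hjlt := Finset.mem_range.1 hj
    refine Finset.mem_range.2 ?_
    show 2*N-1-j < 2*N
    omega
  · intro j hj
    have hjlt := Finset.mem_range.1 hj
    show 2*N-1-(2*N-1-j) = j
    omega

lemma E1int (N : ℕ) (hN : 0 < N) (m : ℤ) :
    ∑ j ∈ Finset.range (2*N),
      (-1)^j * Real.cos ((m:ℝ) * rpt N j) / Real.sin (rpt N j / 2)^2 = 0 := by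
  rcases Int.natAbs_eq m with h | h
  · have hcast : ((m:ℝ)) = ((m.natAbs:ℕ):ℝ) := by
      have h0 : (0:ℤ) ≤ m := by omega
      rw [Nat.cast_natAbs]
      symm
      exact_mod_cast abs_of_nonneg h0
    rw [hcast]
    exact E1 N hN m.natAbs
  · have hcast : ((m:ℝ)) = -((m.natAbs:ℕ):ℝ) := by exact_mod_cast h
    rw [hcast]
    have : ∀ j ∈ Finset.range (2*N),
        (-1:ℝ)^j * Real.cos (-((m.natAbs:ℕ):ℝ) * rpt N j) / Real.sin (rpt N j / 2)^2
        = (-1:ℝ)^j * Real.cos (((m.natAbs:ℕ):ℝ) * rpt N j) / Real.sin (rpt N j / 2)^2 := by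
      intro j _
      rw [show -((m.natAbs:ℕ):ℝ) * rpt N j = -(((m.natAbs:ℕ):ℝ) * rpt N j) by ring, Real.cos_neg]
    rw [Finset.sum_congr rfl this]
    exact E1 N hN m.natAbs

lemma E2int (N : ℕ) (hN : 0 < N) {m : ℤ} (hm : m.natAbs ≤ N) :
    ∑ j ∈ Finset.range (2*N),
      (-1)^j * Real.sin ((m:ℝ) * rpt N j) / Real.sin (rpt N j / 2)^2 = 4*(N:ℝ)*m := by
  rcases Int.natAbs_eq m with h | h
  · have hcast : ((m:ℝ)) = ((m.natAbs:ℕ):ℝ) := by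
      have h0 : (0:ℤ) ≤ m := by omega
      rw [Nat.cast_natAbs]
      symm
      exact_mod_cast abs_of_nonneg h0
    rw [hcast]
    exact E2 N hN hm
  · have hcast : ((m:ℝ)) = -((m.natAbs:ℕ):ℝ) := by exact_mod_cast h
    rw [hcast]
    have : ∀ j ∈ Finset.range (2*N),
        (-1:ℝ)^j * Real.sin (-((m.natAbs:ℕ):ℝ) * rpt N j) / Real.sin (rpt N j / 2)^2
        = -((-1:ℝ)^j * Real.sin (((m.natAbs:ℕ):ℝ) * rpt N j) / Real.sin (rpt N j / 2)^2) := by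
      intro j _
      rw [show -((m.natAbs:ℕ):ℝ) * rpt N j = -(((m.natAbs:ℕ):ℝ) * rpt N j) by ring, Real.sin_neg]
      ring
    rw [Finset.sum_congr rfl this, Finset.sum_neg_distrib, E2 N hN hm]
    ring

lemma Bcos (N : ℕ) (hN : 0 < N) {m : ℤ} (hm : m.natAbs ≤ N) (x : ℝ) :
    ∑ j ∈ Finset.range (2*N),
      (-1)^j * Real.cos ((m:ℝ) * (x + rpt N j)) / Real.sin (rpt N j / 2)^2
      = 4*(N:ℝ)*m * (-Real.sin ((m:ℝ)*x)) := by
  have key : ∀ j ∈ Finset.range (2*N),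
      (-1:ℝ)^j * Real.cos ((m:ℝ) * (x + rpt N j)) / Real.sin (rpt N j / 2)^2
      = Real.cos ((m:ℝ)*x) * ((-1)^j * Real.cos ((m:ℝ) * rpt N j) / Real.sin (rpt N j / 2)^2)
        - Real.sin ((m:ℝ)*x) * ((-1)^j * Real.sin ((m:ℝ) * rpt N j) / Real.sin (rpt N j / 2)^2) := by
    intro j _
    rw [show (m:ℝ) * (x + rpt N j) = (m:ℝ)*x + (m:ℝ)*rpt N j by ring, Real.cos_add]
    ring
  rw [Finset.sum_congr rfl key, Finset.sum_sub_distrib, ← Finset.mul_sum, ← Finset.mul_sum,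
    E1int N hN m, E2int N hN hm]
  ring

lemma Bsin (N : ℕ) (hN : 0 < N) {m : ℤ} (hm : m.natAbs ≤ N) (x : ℝ) :
    ∑ j ∈ Finset.range (2*N),
      (-1)^j * Real.sin ((m:ℝ) * (x + rpt N j)) / Real.sin (rpt N j / 2)^2
      = 4*(N:ℝ)*m * Real.cos ((m:ℝ)*x) := by
  have key : ∀ j ∈ Finset.range (2*N),
      (-1:ℝ)^j * Real.sin ((m:ℝ) * (x + rpt N j)) / Real.sin (rpt N j / 2)^2
      = Real.sin ((m:ℝ)*x) * ((-1)^j * Real.cos ((m:ℝ) * rpt N j) / Real.sin (rpt N j / 2)^2)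
        + Real.cos ((m:ℝ)*x) * ((-1)^j * Real.sin ((m:ℝ) * rpt N j) / Real.sin (rpt N j / 2)^2) := by
    intro j _
    rw [show (m:ℝ) * (x + rpt N j) = (m:ℝ)*x + (m:ℝ)*rpt N j by ring, Real.sin_add]
    ring
  rw [Finset.sum_congr rfl key, Finset.sum_add_distrib, ← Finset.mul_sum, ← Finset.mul_sum,
    E1int N hN m, E2int N hN hm]
  ring

lemma pair (N : ℕ) (hN : 0 < N) (A B C D : ℝ) (k l : ℕ) (hk : k ≤ N) (hl : l ≤ N)
    (hkl : k + l ≤ N) (x : ℝ) :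
    ∑ j ∈ Finset.range (2*N),
      (-1)^j * ((A * Real.cos ((k:ℝ)*(x+rpt N j)) + B * Real.sin ((k:ℝ)*(x+rpt N j)))
        * (C * Real.cos ((l:ℝ)*(x+rpt N j)) + D * Real.sin ((l:ℝ)*(x+rpt N j))))
        / Real.sin (rpt N j / 2)^2
    = 4*(N:ℝ) *
      ((A * (-(((k:ℝ)) * Real.sin ((k:ℝ)*x))) + B * ((k:ℝ) * Real.cos ((k:ℝ)*x)))
          * (C * Real.cos ((l:ℝ)*x) + D * Real.sin ((l:ℝ)*x))
        + (A * Real.cos ((k:ℝ)*x) + B * Real.sin ((k:ℝ)*x))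
          * (C * (-(((l:ℝ)) * Real.sin ((l:ℝ)*x))) + D * ((l:ℝ) * Real.cos ((l:ℝ)*x)))) := by
  set u : ℤ := (k:ℤ) + l with hu'
  set v : ℤ := (k:ℤ) - l with hv'
  have hu : ((u:ℝ)) = (k:ℝ) + l := by rw [hu']; push_cast; ring
  have hv : ((v:ℝ)) = (k:ℝ) - l := by rw [hv']; push_cast; ring
  have hun : u.natAbs ≤ N := by omega
  have hvn : v.natAbs ≤ N := by omega
  set α : ℝ := (A*C - B*D)/2
  set β : ℝ := (A*C + B*D)/2
  set γ : ℝ := (A*D + B*C)/2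
  set δ : ℝ := (B*C - A*D)/2
  have expand : ∀ θ : ℝ,
      (A * Real.cos ((k:ℝ)*θ) + B * Real.sin ((k:ℝ)*θ))
        * (C * Real.cos ((l:ℝ)*θ) + D * Real.sin ((l:ℝ)*θ))
      = α * Real.cos ((u:ℝ)*θ) + β * Real.cos ((v:ℝ)*θ)
        + γ * Real.sin ((u:ℝ)*θ) + δ * Real.sin ((v:ℝ)*θ) := by
    intro θ
    rw [hu, hv, show ((k:ℝ)+l)*θ = (k:ℝ)*θ + (l:ℝ)*θ by ring,
      show ((k:ℝ)-l)*θ = (k:ℝ)*θ - (l:ℝ)*θ by ring,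
      Real.cos_add, Real.sin_add, Real.cos_sub, Real.sin_sub]
    simp only [α, β, γ, δ]
    ring
  have key : ∀ j ∈ Finset.range (2*N),
      (-1:ℝ)^j * ((A * Real.cos ((k:ℝ)*(x+rpt N j)) + B * Real.sin ((k:ℝ)*(x+rpt N j)))
        * (C * Real.cos ((l:ℝ)*(x+rpt N j)) + D * Real.sin ((l:ℝ)*(x+rpt N j))))
        / Real.sin (rpt N j / 2)^2
      = α * ((-1)^j * Real.cos ((u:ℝ) * (x + rpt N j)) / Real.sin (rpt N j / 2)^2)
        + β * ((-1)^j * Real.cos ((v:ℝ) * (x + rpt N j)) / Real.sin (rpt N j / 2)^2)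
        + γ * ((-1)^j * Real.sin ((u:ℝ) * (x + rpt N j)) / Real.sin (rpt N j / 2)^2)
        + δ * ((-1)^j * Real.sin ((v:ℝ) * (x + rpt N j)) / Real.sin (rpt N j / 2)^2) := by
    intro j _
    rw [expand (x + rpt N j)]
    ring
  rw [Finset.sum_congr rfl key, Finset.sum_add_distrib, Finset.sum_add_distrib,
    Finset.sum_add_distrib, ← Finset.mul_sum, ← Finset.mul_sum, ← Finset.mul_sum,
    ← Finset.mul_sum, Bcos N hN hun x, Bcos N hN hvn x, Bsin N hN hun x, Bsin N hN hvn x]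
  rw [hu, hv, show ((k:ℝ)+l)*x = (k:ℝ)*x + (l:ℝ)*x by ring,
    show ((k:ℝ)-l)*x = (k:ℝ)*x - (l:ℝ)*x by ring,
    Real.cos_add, Real.sin_add, Real.cos_sub, Real.sin_sub]
  simp only [α, β, γ, δ]
  ring

lemma hasDerivAt_trig (c1 c2 : ℝ) (k : ℕ) (x : ℝ) :
    HasDerivAt (fun θ : ℝ => c1 * Real.cos ((k:ℝ)*θ) + c2 * Real.sin ((k:ℝ)*θ))
      (c1 * (-((k:ℝ) * Real.sin ((k:ℝ)*x))) + c2 * ((k:ℝ) * Real.cos ((k:ℝ)*x))) x := by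
  have h1 : HasDerivAt (fun θ : ℝ => (k:ℝ)*θ) (k:ℝ) x := by
    simpa using (hasDerivAt_id x).const_mul (k:ℝ)
  have := ((h1.cos).const_mul c1).fun_add ((h1.sin).const_mul c2)
  refine this.congr_deriv ?_
  ring

/-- If `g` is a trigonometric polynomial of degree at most `d` with `|g| ≤ 1`,
then `f = g²` satisfies `|f'| ≤ d`. -/
theorem stmt3 (d : ℕ) (a b : ℕ → ℝ) (g : ℝ → ℝ)
    (hg : ∀ θ : ℝ, g θ = ∑ k ∈ Finset.range (d + 1),
      (a k * Real.cos (k * θ) + b k * Real.sin (k * θ)))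
    (hbd : ∀ θ : ℝ, |g θ| ≤ 1) :
    ∀ θ : ℝ, |deriv (fun θ => (g θ)^2) θ| ≤ d := by
  intro θ₀
  rcases Nat.eq_zero_or_pos d with hd | hd
  · subst hd
    have hconst : (fun θ : ℝ => (g θ)^2) = fun _ => (a 0)^2 := by
      funext θ
      rw [hg θ]
      simp
    rw [hconst, deriv_const]
    simp
  set N : ℕ := 2*d with hNdef
  have hN : 0 < N := by omega
  set s : Finset (ℕ × ℕ) := Finset.range (d+1) ×ˢ Finset.range (d+1) with hs
  set G : ℝ → ℝ := fun θ => ∑ p ∈ s,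
    (a p.1 * Real.cos ((p.1:ℝ)*θ) + b p.1 * Real.sin ((p.1:ℝ)*θ))
      * (a p.2 * Real.cos ((p.2:ℝ)*θ) + b p.2 * Real.sin ((p.2:ℝ)*θ)) with hG
  have hFG : ∀ θ : ℝ, (g θ)^2 = G θ := by
    intro θ
    rw [hg θ, sq, Finset.sum_mul_sum]
    simp only [hG]
    rw [hs, Finset.sum_product]
  set Dp : ℕ × ℕ → ℝ := fun p =>
    (a p.1 * (-((p.1:ℝ) * Real.sin ((p.1:ℝ)*θ₀))) + b p.1 * ((p.1:ℝ) * Real.cos ((p.1:ℝ)*θ₀)))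
      * (a p.2 * Real.cos ((p.2:ℝ)*θ₀) + b p.2 * Real.sin ((p.2:ℝ)*θ₀))
    + (a p.1 * Real.cos ((p.1:ℝ)*θ₀) + b p.1 * Real.sin ((p.1:ℝ)*θ₀))
      * (a p.2 * (-((p.2:ℝ) * Real.sin ((p.2:ℝ)*θ₀))) + b p.2 * ((p.2:ℝ) * Real.cos ((p.2:ℝ)*θ₀)))
    with hDp
  have hGd : HasDerivAt G (∑ p ∈ s, Dp p) θ₀ := by
    rw [hG]
    apply HasDerivAt.fun_sum
    intro p _
    exact (hasDerivAt_trig (a p.1) (b p.1) p.1 θ₀).mul (hasDerivAt_trig (a p.2) (b p.2) p.2 θ₀)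
  have hderiv : deriv (fun θ => (g θ)^2) θ₀ = ∑ p ∈ s, Dp p := by
    have : (fun θ => (g θ)^2) = G := funext hFG
    rw [this]
    exact hGd.deriv
  have hriesz : ∑ j ∈ Finset.range (2*N), (-1)^j * G (θ₀ + rpt N j) / Real.sin (rpt N j / 2)^2
      = 4*(N:ℝ) * ∑ p ∈ s, Dp p := by
    have hswap : ∀ j ∈ Finset.range (2*N),
        (-1:ℝ)^j * G (θ₀ + rpt N j) / Real.sin (rpt N j / 2)^2
        = ∑ p ∈ s, (-1:ℝ)^j *
            ((a p.1 * Real.cos ((p.1:ℝ)*(θ₀+rpt N j)) + b p.1 * Real.sin ((p.1:ℝ)*(θ₀+rpt N j)))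
              * (a p.2 * Real.cos ((p.2:ℝ)*(θ₀+rpt N j)) + b p.2 * Real.sin ((p.2:ℝ)*(θ₀+rpt N j))))
            / Real.sin (rpt N j / 2)^2 := by
      intro j _
      rw [hG]
      rw [Finset.mul_sum, Finset.sum_div]
    rw [Finset.sum_congr rfl hswap, Finset.sum_comm]
    have hpair : ∀ p ∈ s,
        ∑ j ∈ Finset.range (2*N), (-1:ℝ)^j *
            ((a p.1 * Real.cos ((p.1:ℝ)*(θ₀+rpt N j)) + b p.1 * Real.sin ((p.1:ℝ)*(θ₀+rpt N j)))
              * (a p.2 * Real.cos ((p.2:ℝ)*(θ₀+rpt N j)) + b p.2 * Real.sin ((p.2:ℝ)*(θ₀+rpt N j))))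
            / Real.sin (rpt N j / 2)^2
        = 4*(N:ℝ) * Dp p := by
      intro p hp
      rw [hs, Finset.mem_product, Finset.mem_range, Finset.mem_range] at hp
      exact pair N hN (a p.1) (b p.1) (a p.2) (b p.2) p.1 p.2
        (by omega) (by omega) (by omega) θ₀
    rw [Finset.sum_congr rfl hpair, ← Finset.mul_sum]
  -- the weight sum
  have hWsum : ∑ j ∈ Finset.range (2*N), (1:ℝ) / Real.sin (rpt N j / 2)^2 = 4*(N:ℝ)*N := by
    have h := E2 N hN (le_refl N)
    have hcong : ∀ j ∈ Finset.range (2*N),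
        (-1:ℝ)^j * Real.sin ((N:ℝ) * rpt N j) / Real.sin (rpt N j / 2)^2
        = (1:ℝ) / Real.sin (rpt N j / 2)^2 := by
      intro j _
      rw [sin_N_rpt N hN j, ← pow_add, ← two_mul, pow_mul]
      norm_num
    rw [Finset.sum_congr rfl hcong] at h
    exact h
  have hzero : ∑ j ∈ Finset.range (2*N), (-1:ℝ)^j / Real.sin (rpt N j / 2)^2 = 0 := by
    have h := E1 N hN 0
    have hcong : ∀ j ∈ Finset.range (2*N),
        (-1:ℝ)^j * Real.cos (((0:ℕ):ℝ) * rpt N j) / Real.sin (rpt N j / 2)^2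
        = (-1:ℝ)^j / Real.sin (rpt N j / 2)^2 := by
      intro j _
      norm_num
    rw [Finset.sum_congr rfl hcong] at h
    exact h
  -- bound the interpolation sum
  have hbound : |∑ j ∈ Finset.range (2*N),
      (-1:ℝ)^j * G (θ₀ + rpt N j) / Real.sin (rpt N j / 2)^2| ≤ 2*(N:ℝ)*N := by
    have hdecomp : ∀ j ∈ Finset.range (2*N),
        (-1:ℝ)^j * G (θ₀ + rpt N j) / Real.sin (rpt N j / 2)^2
        = ((-1:ℝ)^j * (2 * G (θ₀ + rpt N j) - 1) / Real.sin (rpt N j / 2)^2) / 2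
          + ((-1:ℝ)^j / Real.sin (rpt N j / 2)^2) / 2 := by
      intro j _
      ring
    rw [Finset.sum_congr rfl hdecomp, Finset.sum_add_distrib, ← Finset.sum_div, ← Finset.sum_div,
      hzero]
    have habs : |∑ j ∈ Finset.range (2*N),
        (-1:ℝ)^j * (2 * G (θ₀ + rpt N j) - 1) / Real.sin (rpt N j / 2)^2| ≤ 4*(N:ℝ)*N := by
      calc |∑ j ∈ Finset.range (2*N),
          (-1:ℝ)^j * (2 * G (θ₀ + rpt N j) - 1) / Real.sin (rpt N j / 2)^2|
          ≤ ∑ j ∈ Finset.range (2*N),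
            |(-1:ℝ)^j * (2 * G (θ₀ + rpt N j) - 1) / Real.sin (rpt N j / 2)^2| :=
          Finset.abs_sum_le_sum_abs _ _
        _ ≤ ∑ j ∈ Finset.range (2*N), (1:ℝ) / Real.sin (rpt N j / 2)^2 := by
          apply Finset.sum_le_sum
          intro j hj
          have hspos : 0 < Real.sin (rpt N j / 2)^2 := by
            have := sin_rpt_half_pos N hN (Finset.mem_range.1 hj)
            positivity
          rw [abs_div, div_le_div_iff₀ (abs_pos.2 hspos.ne') hspos]
          have habs2 : |Real.sin (rpt N j / 2)^2| = Real.sin (rpt N j / 2)^2 :=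
            abs_of_pos hspos
          rw [habs2]
          have hG01 : 0 ≤ G (θ₀ + rpt N j) ∧ G (θ₀ + rpt N j) ≤ 1 := by
            rw [← hFG]
            constructor
            · positivity
            · have := hbd (θ₀ + rpt N j)
              nlinarith [abs_nonneg (g (θ₀ + rpt N j)), sq_abs (g (θ₀ + rpt N j)),
                abs_nonneg (g (θ₀ + rpt N j))]
          have : |(-1:ℝ)^j * (2 * G (θ₀ + rpt N j) - 1)| ≤ 1 := by
            rw [abs_mul, abs_pow, abs_neg, abs_one, one_pow, one_mul]
            rw [abs_le]
            constructor <;> nlinarith [hG01.1, hG01.2]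
          nlinarith [hspos]
        _ = 4*(N:ℝ)*N := hWsum
    rw [zero_div, add_zero]
    calc |(∑ j ∈ Finset.range (2*N),
        (-1:ℝ)^j * (2 * G (θ₀ + rpt N j) - 1) / Real.sin (rpt N j / 2)^2) / 2|
        = |∑ j ∈ Finset.range (2*N),
        (-1:ℝ)^j * (2 * G (θ₀ + rpt N j) - 1) / Real.sin (rpt N j / 2)^2| / 2 := by
          rw [abs_div]; norm_num
      _ ≤ (4*(N:ℝ)*N)/2 := by linarith [habs]
      _ = 2*(N:ℝ)*N := by ring
  -- conclude
  rw [hderiv]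
  have h4N : (0:ℝ) < 4*(N:ℝ) := by positivity
  have heq : ∑ p ∈ s, Dp p
      = (∑ j ∈ Finset.range (2*N), (-1:ℝ)^j * G (θ₀ + rpt N j) / Real.sin (rpt N j / 2)^2)
        / (4*(N:ℝ)) := by
    rw [hriesz]
    field_simp
  rw [heq, abs_div, abs_of_pos h4N, div_le_iff₀ h4N]
  calc |∑ j ∈ Finset.range (2*N), (-1:ℝ)^j * G (θ₀ + rpt N j) / Real.sin (rpt N j / 2)^2|
      ≤ 2*(N:ℝ)*N := hbound
    _ = (d:ℝ) * (4*(N:ℝ)) := by rw [hNdef]; push_cast; ring
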